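/- Let c₀ denote the Banach space of real sequences converging to zero with the supremum norm, and let ξ : Ω → c₀ be a Borel-measurable random variable with values in c₀. Then there exists a compact injective bounded linear operator U : c₀ → c₀, namely a diagonal operator U((x₁, x₂, …)) = (ε₁ x₁, ε₂ x₂, …) for some strictly positive non-random sequence (ε_n) tending to zero, such that ξ belongs to the range of U with probability one. -/

import Mathlib

open MeasureTheory Filter ZeroAtInfty

namespace C0DiagAux

noncomputable def mkC0 (f : ℕ → ℝ) (hf : Tendsto f atTop (nhds 0)) : C₀(ℕ, ℝ) :=
  ⟨⟨f, continuous_of_discreteTopology⟩, by rwa [cocompact_eq_atTop (α := ℕ)]⟩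

@[simp] lemma mkC0_apply (f : ℕ → ℝ) (hf) (n : ℕ) : mkC0 f hf n = f n := rfl

lemma tendsto_apply (f : C₀(ℕ, ℝ)) : Tendsto (fun n => f n) atTop (nhds 0) := by
  have := f.zero_at_infty'; rwa [cocompact_eq_atTop (α := ℕ)] at this

lemma norm_le_of_forall (f : C₀(ℕ, ℝ)) {C : ℝ} (hC : 0 ≤ C) (h : ∀ n, |f n| ≤ C) : ‖f‖ ≤ C := by
  rw [← ZeroAtInftyContinuousMap.norm_toBCF_eq_norm]
  exact (BoundedContinuousFunction.norm_le hC).2 (by simpa [Real.norm_eq_abs] using h)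

lemma abs_apply_le_norm (f : C₀(ℕ, ℝ)) (n : ℕ) : |f n| ≤ ‖f‖ := by
  rw [← ZeroAtInftyContinuousMap.norm_toBCF_eq_norm]
  simpa [Real.norm_eq_abs] using f.toBCF.norm_coe_le_norm n

noncomputable def inclFinAux (N : ℕ) : (Fin N → ℝ) →ₗ[ℝ] C₀(ℕ, ℝ) where
  toFun v := mkC0 (fun n => if h : n < N then v ⟨n, h⟩ else 0) (by
    refine tendsto_const_nhds.congr' ?_
    filter_upwards [eventually_ge_atTop N] with n hn
    simp [Nat.not_lt.2 hn])
  map_add' v w := by ext n; by_cases h : n < N <;> simp [h]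
  map_smul' c v := by ext n; by_cases h : n < N <;> simp [h]

noncomputable def inclFin (N : ℕ) : (Fin N → ℝ) →L[ℝ] C₀(ℕ, ℝ) :=
  LinearMap.mkContinuous (inclFinAux N) 1 (by
    intro v
    rw [one_mul]
    refine norm_le_of_forall _ (norm_nonneg v) fun n => ?_
    show |(fun n => if h : n < N then v ⟨n, h⟩ else 0) n| ≤ ‖v‖
    by_cases h : n < N
    · simpa [h, ← Real.norm_eq_abs] using norm_le_pi_norm v ⟨n, h⟩
    · simp [h, norm_nonneg])

@[simp] lemma inclFin_apply (N : ℕ) (v : Fin N → ℝ) (n : ℕ) :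
    inclFin N v n = if h : n < N then v ⟨n, h⟩ else 0 := rfl

lemma isCompactOperator_mul (e : C₀(ℕ, ℝ)) :
    IsCompactOperator (ContinuousLinearMap.mul ℝ C₀(ℕ, ℝ) e) := by
  have htrunc : ∀ N : ℕ, Tendsto (fun n => if n < N then e n else 0) atTop (nhds (0:ℝ)) := by
    intro N
    refine tendsto_const_nhds.congr' ?_
    filter_upwards [eventually_ge_atTop N] with n hn
    simp [Nat.not_lt.2 hn]
  set t : ℕ → C₀(ℕ, ℝ) := fun N => mkC0 (fun n => if n < N then e n else 0) (htrunc N) with ht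
  have hcompact : ∀ N, IsCompactOperator (ContinuousLinearMap.mul ℝ C₀(ℕ, ℝ) (t N)) := by
    intro N
    refine ⟨inclFin N '' Metric.closedBall 0 ‖e‖,
      (isCompact_closedBall _ _).image (inclFin N).continuous, ?_⟩
    refine Filter.mem_of_superset (Metric.closedBall_mem_nhds (0 : C₀(ℕ, ℝ)) one_pos) ?_
    intro x hx
    simp only [Metric.mem_closedBall, dist_zero_right] at hx
    refine ⟨fun i => e i * x i, ?_, ?_⟩
    · simp only [Metric.mem_closedBall, dist_zero_right]
      refine (pi_norm_le_iff_of_nonneg (norm_nonneg e)).2 fun i => ?_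
      calc ‖e i * x i‖ = |e i| * |x i| := by rw [Real.norm_eq_abs, abs_mul]
        _ ≤ ‖e‖ * 1 := mul_le_mul (abs_apply_le_norm e i)
              ((abs_apply_le_norm x i).trans hx) (abs_nonneg _) (norm_nonneg e)
        _ = ‖e‖ := mul_one _
    · ext n
      by_cases h : n < N <;>
        simp [h, ContinuousLinearMap.mul_apply', ZeroAtInftyContinuousMap.mul_apply, ht]
  refine isCompactOperator_of_tendsto (l := atTop) ?_ (Eventually.of_forall hcompact)
  rw [Metric.tendsto_atTop]
  intro δ hδ
  obtain ⟨N₀, hN₀⟩ := (Metric.tendsto_atTop.1 (tendsto_apply e)) (δ/2) (by linarith)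
  refine ⟨N₀, fun N hN => ?_⟩
  rw [dist_eq_norm]
  have key : ContinuousLinearMap.mul ℝ C₀(ℕ, ℝ) (t N) - ContinuousLinearMap.mul ℝ C₀(ℕ, ℝ) e
      = ContinuousLinearMap.mul ℝ C₀(ℕ, ℝ) (t N - e) := by rw [map_sub]
  rw [key]
  have h1 : ‖t N - e‖ ≤ δ/2 := by
    refine norm_le_of_forall _ (by linarith) fun n => ?_
    have h2 : (t N - e) n = (if n < N then e n else 0) - e n := by
      simp [ht, ZeroAtInftyContinuousMap.sub_apply]
    rw [h2]
    by_cases h : n < N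
    · simp [h]; linarith
    · have := hN₀ n (le_trans hN (Nat.not_lt.1 h))
      rw [Real.dist_eq, sub_zero] at this
      simp only [h, if_neg, ite_false, zero_sub, abs_neg]
      linarith
  calc ‖ContinuousLinearMap.mul ℝ C₀(ℕ, ℝ) (t N - e)‖ ≤ ‖t N - e‖ :=
        ContinuousLinearMap.opNorm_mul_apply_le _ _ _
    _ ≤ δ/2 := h1
    _ < δ := by linarith

end C0DiagAux

open C0DiagAux

set_option maxHeartbeats 1000000 in
/-- For any random variable `ξ` with values in `c₀`, there is a diagonal compact injective
bounded linear operator `U` on `c₀`, given by multiplication by a strictly positive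
sequence tending to zero, such that `ξ` lies in the range of `U` almost surely. -/
theorem exists_diagonal_compact_operator_range_ae_c0
    [MeasurableSpace C₀(ℕ, ℝ)] [BorelSpace C₀(ℕ, ℝ)]
    {Ω : Type*} [MeasurableSpace Ω] (P : Measure Ω) [IsProbabilityMeasure P]
    (ξ : Ω → C₀(ℕ, ℝ)) (hξ : Measurable ξ) :
    ∃ (ε : ℕ → ℝ) (U : C₀(ℕ, ℝ) →L[ℝ] C₀(ℕ, ℝ)),
      (∀ n, 0 < ε n) ∧ Tendsto ε atTop (nhds 0) ∧
      (∀ x : C₀(ℕ, ℝ), ∀ n, U x n = ε n * x n) ∧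
      IsCompactOperator U ∧ Function.Injective U ∧
      ∀ᵐ ω ∂P, ∃ y : C₀(ℕ, ℝ), ξ ω = U y := by
  classical
  -- the events
  set A : ℕ → ℕ → Set Ω := fun k N => {ω | ∀ n, N ≤ n → |ξ ω n| ≤ (1/4:ℝ)^k} with hAdef
  have heval : ∀ n : ℕ, Measurable (fun f : C₀(ℕ,ℝ) => f n) := fun n =>
    ((continuous_eval_const n).comp
      (ZeroAtInftyContinuousMap.isometry_toBCF (α := ℕ) (β := ℝ)).continuous).measurable
  have hA : ∀ k N, MeasurableSet (A k N) := by
    intro k N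
    have h1 : A k N = ⋂ n, {ω | N ≤ n → |ξ ω n| ≤ (1/4:ℝ)^k} := by ext ω; simp [hAdef]
    rw [h1]
    refine MeasurableSet.iInter fun n => ?_
    by_cases hn : N ≤ n
    · have h2 : {ω | N ≤ n → |ξ ω n| ≤ (1/4:ℝ)^k}
          = (fun ω => |ξ ω n|) ⁻¹' Set.Iic ((1/4:ℝ)^k) := by ext ω; simp [hn]
      rw [h2]
      exact (((heval n).comp hξ).abs) measurableSet_Iic
    · have h2 : {ω | N ≤ n → |ξ ω n| ≤ (1/4:ℝ)^k} = Set.univ := by ext ω; simp [hn]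
      rw [h2]; exact MeasurableSet.univ
  -- choose truncation levels
  have hexN : ∀ k, ∃ N, P ((A k N)ᶜ) ≤ (2⁻¹ : ENNReal)^k := by
    intro k
    have hmono : Antitone (fun N => (A k N)ᶜ) := by
      intro N M hNM
      apply Set.compl_subset_compl.2
      intro ω hω n hn
      exact hω n (le_trans hNM hn)
    have hiInter : ⋂ N, (A k N)ᶜ = ∅ := by
      ext ω
      simp only [Set.mem_iInter, Set.mem_compl_iff, Set.mem_empty_iff_false, iff_false, not_forall]
      push_neg
      obtain ⟨N, hN⟩ := (Metric.tendsto_atTop.1 (tendsto_apply (ξ ω))) ((1/4:ℝ)^k)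
        (by positivity)
      exact ⟨N, fun n hn => le_of_lt (by simpa [Real.dist_eq] using hN n hn)⟩
    have htends : Tendsto (fun N => P ((A k N)ᶜ)) atTop (nhds 0) := by
      have := tendsto_measure_iInter_atTop (μ := P) (s := fun N => (A k N)ᶜ)
        (fun N => ((hA k N).compl).nullMeasurableSet) hmono ⟨0, measure_ne_top _ _⟩
      rw [hiInter] at this
      simpa [Function.comp_def] using this
    have hpos : (0 : ENNReal) < (2⁻¹)^k := ENNReal.pow_pos (by simp) k
    exact ((htends.eventually_lt_const hpos).exists).imp fun N h => le_of_lt h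
  choose N0 hN0 using hexN
  set N : ℕ → ℕ := fun k => N0 k + k with hNdef
  have hkN : ∀ k, k ≤ N k := fun k => Nat.le_add_left k (N0 k)
  have hNbound : ∀ k, P ((A k (N k))ᶜ) ≤ (2⁻¹ : ENNReal)^k := by
    intro k
    refine le_trans (measure_mono ?_) (hN0 k)
    apply Set.compl_subset_compl.2
    intro ω hω n hn
    exact hω n (le_trans (Nat.le_add_right (N0 k) k) hn)
  -- Borel–Cantelli
  have hBC : ∀ᵐ ω ∂P, ∀ᶠ k in atTop, ω ∉ (A k (N k))ᶜ := by
    refine ae_eventually_notMem (ne_top_of_le_ne_top ?_ (ENNReal.tsum_le_tsum hNbound))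
    rw [ENNReal.tsum_geometric, ENNReal.one_sub_inv_two, inv_inv]
    exact ENNReal.ofNat_ne_top
  -- the diagonal sequence
  set m : ℕ → ℕ := fun n => Nat.findGreatest (fun j => N j ≤ n) n with hmdef
  have hm_ge : ∀ k n, N k ≤ n → k ≤ m n := fun k n h =>
    Nat.le_findGreatest (le_trans (hkN k) h) h
  have hm_spec : ∀ k n, N k ≤ n → N (m n) ≤ n := fun k n h =>
    Nat.findGreatest_spec (P := fun j => N j ≤ n) (le_trans (hkN k) h) h
  have hm_tendsto : Tendsto m atTop atTop :=
    tendsto_atTop_atTop.2 fun k => ⟨N k, fun n hn => hm_ge k n hn⟩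
  have h2 : Tendsto (fun j : ℕ => (1/2:ℝ)^j) atTop (nhds 0) :=
    tendsto_pow_atTop_nhds_zero_of_lt_one (by norm_num) (by norm_num)
  set ε : ℕ → ℝ := fun n => (1/2:ℝ)^(m n + 1) with hεdef
  have hεpos : ∀ n, 0 < ε n := fun n => pow_pos (by norm_num) _
  have hεtends : Tendsto ε atTop (nhds 0) :=
    h2.comp (tendsto_atTop_mono (fun n => Nat.le_add_right (m n) 1) hm_tendsto)
  set eC : C₀(ℕ, ℝ) := mkC0 ε hεtends with heC
  set U : C₀(ℕ, ℝ) →L[ℝ] C₀(ℕ, ℝ) := ContinuousLinearMap.mul ℝ C₀(ℕ, ℝ) eC with hUdef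
  have hUapp : ∀ x : C₀(ℕ, ℝ), ∀ n, U x n = ε n * x n := fun x n => rfl
  refine ⟨ε, U, hεpos, hεtends, hUapp, isCompactOperator_mul eC, ?_, ?_⟩
  · -- injectivity
    intro x y h
    ext n
    have := congrArg (fun f : C₀(ℕ, ℝ) => f n) h
    simp only [hUapp] at this
    exact mul_left_cancel₀ (ne_of_gt (hεpos n)) this
  · -- a.e. range membership
    filter_upwards [hBC] with ω hω
    obtain ⟨K, hK⟩ := eventually_atTop.1 hω
    have hKmem : ∀ k, K ≤ k → ∀ n, N k ≤ n → |ξ ω n| ≤ (1/4:ℝ)^k := by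
      intro k hk n hn
      have := hK k hk
      rw [Set.notMem_compl_iff] at this
      exact this n hn
    set g : ℕ → ℝ := fun n => ξ ω n / ε n with hgdef
    have hg : Tendsto g atTop (nhds 0) := by
      have hb : Tendsto (fun n => 2 * (1/2:ℝ)^(m n)) atTop (nhds 0) := by
        have := (h2.comp hm_tendsto).const_mul (2:ℝ)
        simpa using this
      refine squeeze_zero_norm' ?_ hb
      filter_upwards [eventually_ge_atTop (N K)] with n hn
      have hk : K ≤ m n := hm_ge K n hn
      have hs : N (m n) ≤ n := hm_spec K n hn
      have hxi : |ξ ω n| ≤ (1/4:ℝ)^(m n) := hKmem (m n) hk n hs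
      have hεval : ε n = (1/2:ℝ)^(m n + 1) := rfl
      have hratio : (1/4:ℝ)^(m n) / (1/2:ℝ)^(m n + 1) = 2 * (1/2:ℝ)^(m n) := by
        rw [div_eq_iff (by positivity), pow_succ,
          show (1/4:ℝ) = (1/2)*(1/2) by norm_num, mul_pow]
        ring
      calc ‖g n‖ = |ξ ω n| / ε n := by
            rw [Real.norm_eq_abs, hgdef, abs_div, abs_of_pos (hεpos n)]
        _ ≤ (1/4:ℝ)^(m n) / (1/2:ℝ)^(m n + 1) := by
            rw [hεval]
            exact div_le_div_of_nonneg_right hxi (by positivity) |>.trans_eq rfl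
        _ = 2 * (1/2:ℝ)^(m n) := hratio
    refine ⟨mkC0 g hg, ?_⟩
    ext n
    have : U (mkC0 g hg) n = ε n * g n := hUapp _ n
    rw [this, hgdef]
    field_simp
    exact (mul_div_cancel_right₀ _ (hεpos n).ne').symm
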